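/- Let W be a trace-free (Weyl-type) Osserman algebraic curvature tensor on a Euclidean vector space of dimension n ≥ 2. If there is a unit vector v and an orthonormal basis {e_1,...,e_{n-1},v} of eigenvectors of J_W(v) such that W(e_i,v)e_j = 0 for all i ≠ j, then W = 0. -/

import Mathlib

open scoped RealInnerProductSpace


lemma aux_symm_nilpotent {V : Type*} [NormedAddCommGroup V] [InnerProductSpace ℝ V]
    (f : V →ₗ[ℝ] V) (hs : ∀ y z : V, ⟪f y, z⟫ = ⟪f z, y⟫) (h : IsNilpotent f) : f = 0 := by
  have hpow : ∀ (m : ℕ) (y z : V), ⟪(f ^ m) y, z⟫ = ⟪(f ^ m) z, y⟫ := by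
    intro m
    induction m with
    | zero => intro y z; simp [real_inner_comm]
    | succ m ih =>
      intro y z
      have hc : f ^ m * f = f * f ^ m := (pow_succ f m).symm.trans (pow_succ' f m)
      rw [pow_succ, Module.End.mul_apply, ih (f y) z, real_inner_comm,
        hs y ((f ^ m) z), hc, Module.End.mul_apply]
  have key : ∀ k : ℕ, f ^ (2 ^ k) = 0 → f = 0 := by
    intro k
    induction k with
    | zero => intro h1; simpa using h1
    | succ k ih =>
      intro h1
      apply ih
      have hsq : (f ^ (2 ^ k)) * (f ^ (2 ^ k)) = 0 := by
        rw [← pow_add, show 2 ^ k + 2 ^ k = 2 ^ (k + 1) by ring]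
        exact h1
      ext x
      have : ⟪(f ^ (2 ^ k)) x, (f ^ (2 ^ k)) x⟫ = 0 := by
        rw [hpow (2 ^ k) x ((f ^ (2 ^ k)) x), ← Module.End.mul_apply, hsq]
        simp
      simpa using inner_self_eq_zero.mp this
  obtain ⟨m, hm⟩ := h
  apply key m
  rw [← Nat.sub_add_cancel (Nat.lt_two_pow_self (n := m)).le, pow_add, hm, mul_zero]

/-- Let `W` be a trace-free (Weyl-type) Osserman algebraic curvature
tensor on a Euclidean space of dimension `n ≥ 2`.  If there is a unit vector `v`
and an orthonormal basis `{e_1, …, e_{n-1}, v}` of eigenvectors of `J_W(v)` such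
that `W(e_i,v)e_j = 0` for all `i ≠ j`, then `W = 0`. -/
theorem weyl_osserman_adapted_basis_vanishes
    {V : Type*} [NormedAddCommGroup V] [InnerProductSpace ℝ V]
    [FiniteDimensional ℝ V] (n : ℕ) (hn2 : 2 ≤ n)
    (hdim : Module.finrank ℝ V = n)
    (W : V →ₗ[ℝ] V →ₗ[ℝ] V →ₗ[ℝ] V)
    (hanti1 : ∀ x y z : V, W x y z = - W y x z)
    (hanti2 : ∀ x y z w : V, ⟪W x y z, w⟫ = - ⟪W x y w, z⟫)
    (hpair : ∀ x y z w : V, ⟪W x y z, w⟫ = ⟪W z w x, y⟫)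
    (hbianchi : ∀ x y z : V, W x y z + W y z x + W z x y = 0)
    -- trace-free (zero Ricci contraction)
    (hricci : ∀ (c : OrthonormalBasis (Fin n) ℝ V) (x y : V),
      ∑ i, ⟪W x (c i) y, c i⟫ = 0)
    (J : V → V →ₗ[ℝ] V) (hJ : ∀ x y : V, J x y = W x y x)
    -- Osserman: constant eigenvalues on the unit sphere
    (hOss : ∀ x y : V, ‖x‖ = 1 → ‖y‖ = 1 → (J x).charpoly = (J y).charpoly)
    -- Rakić duality principle (may be assumed)
    (hdual : ∀ (x y : V) (lam : ℝ), ‖x‖ = 1 → ‖y‖ = 1 →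
      (J x y = lam • y ↔ J y x = lam • x))
    -- the adapted orthonormal basis `{e_1,…,e_{n-1},v}`
    (b : OrthonormalBasis (Fin n) ℝ V) (i₀ : Fin n) (v : V) (hv : v = b i₀)
    (heig : ∀ i : Fin n, ∃ lam : ℝ, J v (b i) = lam • b i)
    (hW0 : ∀ i j : Fin n, i ≠ i₀ → j ≠ i₀ → i ≠ j → W (b i) v (b j) = 0) :
    ∀ x y z : V, W x y z = 0 := by
  classical
  choose lam hlam using heig
  have hnorm : ∀ i, ‖b i‖ = 1 := b.orthonormal.1
  have hvnorm : ‖v‖ = 1 := by rw [hv]; exact hnorm i₀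
  have hbij : ∀ i j : Fin n, ⟪b i, b j⟫ = if i = j then 1 else 0 :=
    fun i j => orthonormal_iff_ite.mp b.orthonormal i j
  -- W x x z = 0
  have hxx : ∀ x z : V, W x x z = 0 := by
    intro x z
    have h := hanti1 x x z
    have h2 : W x x z + W x x z = 0 := by nth_rewrite 2 [h]; simp
    have : (2 : ℝ) • W x x z = 0 := by rw [two_smul]; exact h2
    simpa [smul_eq_zero] using this
  have hv0 : v ≠ 0 := by
    intro h; rw [h, norm_zero] at hvnorm; norm_num at hvnorm
  -- lam i₀ = 0
  have hlam_i0 : lam i₀ = 0 := by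
    have h := hlam i₀
    rw [hJ, ← hv, hxx] at h
    rcases smul_eq_zero.mp h.symm with h' | h'
    · exact h'
    · exact absurd h' hv0
  -- duality consequence
  have hdualW : ∀ i : Fin n, W (b i) v (b i) = lam i • v := by
    intro i
    have h := (hdual v (b i) (lam i) hvnorm (hnorm i)).mp (hlam i)
    rwa [hJ] at h
  -- rotation argument
  have hstep : ∀ i j : Fin n, i ≠ i₀ → j ≠ i₀ → i ≠ j → lam i = lam j := by
    intro i j hi hj hij
    set c : ℝ := (Real.sqrt 2)⁻¹ with hc
    have hs2 : Real.sqrt 2 ≠ 0 := by positivity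
    have hcc : c * c = 1 / 2 := by
      rw [hc, ← mul_inv]
      rw [Real.mul_self_sqrt (by norm_num : (0:ℝ) ≤ 2)]
      norm_num
    have hcne : c ≠ 0 := by rw [hc]; exact inv_ne_zero hs2
    set u : V := c • (b i + b j) with hu
    have hunorm : ‖u‖ = 1 := by
      have hinner : ⟪u, u⟫ = 1 := by
        rw [hu]
        rw [real_inner_smul_left, real_inner_smul_right]
        rw [inner_add_left, inner_add_right, inner_add_right]
        rw [hbij i i, hbij i j, hbij j i, hbij j j]
        simp [hij, hij.symm, ← mul_assoc, hcc]
        linarith [hcc]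
      have h2 : ‖u‖ ^ 2 = 1 := by
        rw [← real_inner_self_eq_norm_sq]; exact hinner
      nlinarith [norm_nonneg u]
    set μ : ℝ := (c * c) * (lam i + lam j) with hμ
    have hJuv : J u v = μ • v := by
      rw [hJ, hu]
      simp only [map_add, map_smul, LinearMap.add_apply, LinearMap.smul_apply,
        hdualW i, hdualW j, hW0 i j hi hj hij, hW0 j i hj hi hij.symm,
        add_zero, zero_add, smul_smul, hμ]
      module
    have hJvu := (hdual u v μ hunorm hvnorm).mp hJuv
    -- expand J v u
    have hlhs : J v u = c • (lam i • b i + lam j • b j) := by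
      rw [hu, map_smul, map_add, hlam i, hlam j]
    rw [hlhs, hu] at hJvu
    -- take inner product with b i
    have hin := congrArg (fun w => ⟪w, b i⟫) hJvu
    simp only [real_inner_smul_left, inner_add_left, hbij i i, hbij j i,
      if_pos rfl, if_neg hij.symm] at hin
    have : c * lam i = μ * c := by
      field_simp at hin ⊢
      norm_num at hin
      linarith [hin]
    have hli : lam i = μ := by
      field_simp at this
      rcases mul_left_cancel₀ hcne (by rw [this] : c * lam i = c * μ) with h
      exact h
    rw [hμ, hcc] at hli
    linarith
  -- trace is zero
  have hsum : ∑ i, lam i = 0 := by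
    have h := hricci b v v
    have heq : ∀ i : Fin n, ⟪W v (b i) v, b i⟫ = lam i := by
      intro i
      have : W v (b i) v = lam i • b i := by rw [← hJ]; exact hlam i
      rw [this, real_inner_smul_left, hbij i i, if_pos rfl, mul_one]
    rwa [Finset.sum_congr rfl (fun i _ => heq i)] at h
  -- pick j₀ ≠ i₀
  obtain ⟨j₀, hj₀⟩ := Fintype.exists_ne_of_one_lt_card (by rw [Fintype.card_fin]; omega) i₀
  -- all lam i = lam j₀ for i ≠ i₀
  have hall : ∀ i : Fin n, i ≠ i₀ → lam i = lam j₀ := by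
    intro i hi
    by_cases h : i = j₀
    · rw [h]
    · exact hstep i j₀ hi hj₀ h
  have hlamzero : ∀ i, lam i = 0 := by
    have hsum2 : ∑ i, lam i = lam i₀ + ∑ i ∈ Finset.univ.erase i₀, lam i :=
      (Finset.add_sum_erase _ _ (Finset.mem_univ i₀)).symm
    have hsum3 : ∑ i ∈ Finset.univ.erase i₀, lam i = (n - 1 : ℕ) * lam j₀ := by
      rw [Finset.sum_congr rfl (fun i hi => hall i (Finset.ne_of_mem_erase hi))]
      rw [Finset.sum_const, Finset.card_erase_of_mem (Finset.mem_univ i₀)]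
      simp [nsmul_eq_mul]
    have hj0zero : lam j₀ = 0 := by
      rw [hsum2, hlam_i0, hsum3, zero_add] at hsum
      have hne : ((n - 1 : ℕ) : ℝ) ≠ 0 :=
        Nat.cast_ne_zero.mpr (by omega)
      exact (mul_eq_zero.mp hsum).resolve_left hne
    intro i
    by_cases h : i = i₀
    · rw [h, hlam_i0]
    · rw [hall i h, hj0zero]
  -- J v = 0
  have hJv : J v = 0 := by
    apply b.toBasis.ext
    intro i
    rw [b.coe_toBasis, hlam i, hlamzero i, zero_smul, LinearMap.zero_apply]
  -- J x = 0 for every unit x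
  have hJunit : ∀ x : V, ‖x‖ = 1 → J x = 0 := by
    intro x hx
    have hchv : (J v).charpoly = Polynomial.X ^ Module.finrank ℝ V := by
      apply IsNilpotent.charpoly_eq_X_pow_finrank
      exact ⟨1, by rw [pow_one, hJv]⟩
    have hnil : IsNilpotent (J x) := by
      rw [LinearMap.isNilpotent_iff_charpoly, hOss x v hx hvnorm, hchv]
    apply aux_symm_nilpotent (J x) _ hnil
    intro y z
    rw [hJ, hJ]
    exact hpair x y x z
  -- W x y x = 0 for all x, y
  have hWxyx : ∀ x y : V, W x y x = 0 := by
    intro x y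
    by_cases hx : x = 0
    · rw [hx]; simp
    · set u : V := ‖x‖⁻¹ • x with hu
      have hunorm : ‖u‖ = 1 := by
        rw [hu, norm_smul, norm_inv, norm_norm, inv_mul_cancel₀ (norm_ne_zero_iff.mpr hx)]
      have hxu : x = ‖x‖ • u := by
        rw [hu, smul_smul, mul_inv_cancel₀ (norm_ne_zero_iff.mpr hx), one_smul]
      have hW : W u y u = 0 := by rw [← hJ, hJunit u hunorm]; rfl
      rw [hxu]
      simp only [map_smul, LinearMap.smul_apply, hW, smul_zero]
  -- polarization
  have hpol : ∀ x y z : V, W x y z + W z y x = 0 := by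
    intro x y z
    have h := hWxyx (x + z) y
    simp only [map_add, LinearMap.add_apply, hWxyx, zero_add, add_zero] at h
    rw [add_comm]
    exact h
  -- final algebra
  intro x y z
  have h1 : W z x y = W x y z := by
    have hp := hpol z x y
    rw [hanti1 y x z] at hp
    exact eq_of_sub_eq_zero (by rw [sub_eq_add_neg]; exact hp)
  have h2 : W y z x = W x y z := by
    have hp := hpol x z y
    rw [hanti1 x z y, h1] at hp
    exact eq_of_sub_eq_zero (by rw [sub_eq_add_neg]; rw [add_comm] at hp; exact hp)
  have hb := hbianchi x y z
  rw [h1, h2] at hb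
  have h3 : (3 : ℝ) • W x y z = W x y z + W x y z + W x y z := by module
  rw [hb] at h3
  have := smul_eq_zero.mp h3
  rcases this with h' | h'
  · norm_num at h'
  · exact h'
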